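/- Let (Z, τ) be a measure space with τ a probability measure, let n ∈ ℕ, and let φ : Z → (Fin n → ℝ) be measurable with z ↦ ‖φ(z)‖² integrable with respect to τ. Define the real n×n matrix Σ by Σᵢⱼ = ∫ φ(z)ᵢ · φ(z)ⱼ dτ(z), and let λ > 0. Let q : Z → ℝ be measurable with q ≥ 0 and ∫ q dτ = 1, and suppose c ∈ ℝ satisfies ⟨φ(z), (Σ + λ·1)⁻¹ · φ(z)⟩ ≤ c · q(z) for τ-almost every z. Then trace(Σ * (Σ + λ·1)⁻¹) ≤ c. -/

import Mathlib

open MeasureTheory Matrix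

/-- Optimality of the degrees of freedom (Section 3.1): for every probability density `q`
with respect to `τ` and every `c` with `⟨φ(z), (Σ+λI)⁻¹ φ(z)⟩ ≤ c·q(z)` a.e.,
we have `trace(Σ(Σ+λI)⁻¹) ≤ c`, i.e. `N_{q,λ} ≥ N*_λ`. -/
theorem stmt11 {Z : Type*} [MeasurableSpace Z] (τ : Measure Z) [IsProbabilityMeasure τ]
    (n : ℕ) (φ : Z → (Fin n → ℝ)) (hφ : Measurable φ)
    (hint : Integrable (fun z => ‖φ z‖ ^ 2) τ)
    (S : Matrix (Fin n) (Fin n) ℝ) (hS : ∀ i j, S i j = ∫ z, φ z i * φ z j ∂τ)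
    (lam : ℝ) (hlam : 0 < lam)
    (q : Z → ℝ) (hq : Measurable q) (hq0 : ∀ z, 0 ≤ q z) (hq1 : ∫ z, q z ∂τ = 1)
    (c : ℝ)
    (hc : ∀ᵐ z ∂τ, φ z ⬝ᵥ ((S + lam • (1 : Matrix (Fin n) (Fin n) ℝ))⁻¹ *ᵥ φ z) ≤ c * q z) :
    (S * (S + lam • (1 : Matrix (Fin n) (Fin n) ℝ))⁻¹).trace ≤ c := by
  set B := (S + lam • (1 : Matrix (Fin n) (Fin n) ℝ))⁻¹ with hB
  -- integrability of products
  have hij : ∀ i j, Integrable (fun z => φ z i * φ z j) τ := by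
    intro i j
    refine hint.mono ?_ (Filter.Eventually.of_forall fun z => ?_)
    · exact (((measurable_pi_apply i).comp hφ).mul ((measurable_pi_apply j).comp hφ)).aestronglyMeasurable
    · have hi : |φ z i| ≤ ‖φ z‖ := by
        simpa using norm_le_pi_norm (φ z) i
      have hj : |φ z j| ≤ ‖φ z‖ := by
        simpa using norm_le_pi_norm (φ z) j
      have : ‖φ z i * φ z j‖ ≤ ‖φ z‖ * ‖φ z‖ := by
        rw [norm_mul]
        exact mul_le_mul hi hj (abs_nonneg _) (norm_nonneg _)
      simpa [pow_two, abs_of_nonneg (mul_nonneg (norm_nonneg (φ z)) (norm_nonneg (φ z)))] using this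
  -- q integrable
  have hqint : Integrable q τ := by
    by_contra h
    rw [integral_undef h] at hq1
    norm_num at hq1
  -- rewrite the quadratic form as a double sum
  have hform : ∀ z, φ z ⬝ᵥ (B *ᵥ φ z) = ∑ i, ∑ j, B i j * (φ z i * φ z j) := by
    intro z
    simp only [dotProduct, mulVec, Finset.mul_sum]
    congr 1; funext i; congr 1; funext j; ring
  have hfint : Integrable (fun z => ∑ i, ∑ j, B i j * (φ z i * φ z j)) τ :=
    integrable_finset_sum _ fun i _ => integrable_finset_sum _ fun j _ => (hij i j).const_mul _
  -- symmetry of S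
  have hsymm : ∀ i j, S i j = S j i := by
    intro i j
    rw [hS, hS]
    exact integral_congr_ae (Filter.Eventually.of_forall fun z => mul_comm _ _)
  -- the integral equals the trace
  have key : ∫ z, ∑ i, ∑ j, B i j * (φ z i * φ z j) ∂τ = (S * B).trace := by
    rw [integral_finset_sum _ (f := fun i z => ∑ j, B i j * (φ z i * φ z j)) fun i _ => integrable_finset_sum _ fun j _ => (hij i j).const_mul _]
    have : ∀ i, ∫ z, ∑ j, B i j * (φ z i * φ z j) ∂τ = ∑ j, B i j * S i j := by
      intro i
      rw [integral_finset_sum _ (f := fun j z => B i j * (φ z i * φ z j)) fun j _ => (hij i j).const_mul _]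
      exact Finset.sum_congr rfl fun j _ => by rw [integral_const_mul, ← hS]
    rw [Finset.sum_congr rfl fun i _ => this i]
    rw [Matrix.trace, Finset.sum_comm]
    refine Finset.sum_congr rfl fun j _ => ?_
    simp only [Matrix.diag_apply, Matrix.mul_apply]
    refine Finset.sum_congr rfl fun i _ => ?_
    rw [hsymm i j]; ring
  -- conclude
  have hmono : ∫ z, ∑ i, ∑ j, B i j * (φ z i * φ z j) ∂τ ≤ ∫ z, c * q z ∂τ := by
    refine integral_mono_ae hfint (hqint.const_mul c) ?_
    filter_upwards [hc] with z hz
    rw [← hform z]; exact hz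
  rw [key] at hmono
  calc (S * B).trace ≤ ∫ z, c * q z ∂τ := hmono
    _ = c := by rw [integral_const_mul, hq1, mul_one]
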